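/- The divisibility partial order is future-finite-universal: for every countable partial order (Q, ≤_Q) in which every up-set {y : x ≤_Q y} is finite, there exists a map E from Q to the positive integers such that x ≤_Q y if and only if E(y) divides E(x). -/

import Mathlib

/-- **The divisibility order is future-finite-universal.**
Every countable partial order in which every up-set is finite embeds into the
positive integers ordered by reverse divisibility (`x ≤_d y` iff `y ∣ x`). -/
theorem divisibility_futureFinite_universal (Q : Type) [Countable Q] [PartialOrder Q]
    (hfuture : ∀ x : Q, {y : Q | x ≤ y}.Finite) :
    ∃ E : Q → ℕ+, ∀ x y : Q, x ≤ y ↔ E y ∣ E x := by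
  obtain ⟨g, hg⟩ := exists_injective_nat Q
  set p : Q → ℕ := fun q => Nat.nth Nat.Prime (g q) with hp
  have hprime : ∀ q, (p q).Prime := fun q => Nat.prime_nth_prime (g q)
  have hpinj : Function.Injective p :=
    fun a b h => hg (Nat.nth_injective Nat.infinite_setOf_prime h)
  set S : Q → Finset Q := fun x => (hfuture x).toFinset with hS
  have hmemS : ∀ x y : Q, y ∈ S x ↔ x ≤ y := by
    intro x y; simp [hS, Set.Finite.mem_toFinset]
  have hpos : ∀ x : Q, 0 < ∏ y ∈ S x, p y := by
    intro x; exact Finset.prod_pos fun y _ => (hprime y).pos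
  refine ⟨fun x => ⟨∏ y ∈ S x, p y, hpos x⟩, ?_⟩
  intro x y
  refine Iff.trans ?_ PNat.dvd_iff.symm
  simp only [PNat.mk_coe, PNat.mk_ofNat]
  constructor
  · intro hxy
    apply Finset.prod_dvd_prod_of_subset
    intro z hz
    exact (hmemS x z).mpr (le_trans hxy ((hmemS y z).mp hz))
  · intro hdvd
    have hy : y ∈ S y := (hmemS y y).mpr le_rfl
    have h1 : p y ∣ ∏ z ∈ S y, p z := Finset.dvd_prod_of_mem _ hy
    have h2 : p y ∣ ∏ z ∈ S x, p z := h1.trans hdvd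
    obtain ⟨a, ha, hpa⟩ := (Nat.Prime.prime (hprime y)).exists_mem_finset_dvd h2
    have : p y = p a := ((Nat.prime_dvd_prime_iff_eq (hprime y) (hprime a)).mp hpa)
    have : a = y := (hpinj this.symm)
    exact (hmemS x y).mp (this ▸ ha)
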